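/- In the polynomial ring ℂ[x₁, x₂, x₃, x₄, y₁, y₂, y₃, y₄], the three quadratic polynomials μ_e = y₁x₂ + y₃x₄, μ_f = y₂x₁ + y₄x₃ and μ_h = y₁x₁ − y₂x₂ + y₃x₃ − y₄x₄ form a regular sequence. -/

import Mathlib

open MvPolynomial
set_option maxHeartbeats 1000000
set_option synthInstance.maxHeartbeats 400000

namespace Sl2Aux

noncomputable abbrev R8 : Type := MvPolynomial (Fin 8) ℂ
noncomputable abbrev K8 : Type := FractionRing R8




/-- "kill variable i" algebra endomorphism -/
noncomputable def pi (i : Fin 8) : R8 →ₐ[ℂ] R8 :=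
  aeval (fun j => if j = i then 0 else X j)

lemma sub_pi_mem (i : Fin 8) (g : R8) : g - pi i g ∈ Ideal.span {(X i : R8)} := by
  induction g using MvPolynomial.induction_on with
  | C c => simp [pi]
  | add p q hp hq =>
      have : p + q - pi i (p + q) = (p - pi i p) + (q - pi i q) := by
        rw [map_add]; ring
      rw [this]; exact Ideal.add_mem _ hp hq
  | mul_X p j hp =>
      have : p * X j - pi i (p * X j)
          = (p - pi i p) * X j + (X j - pi i (X j)) * pi i p := by
        rw [map_mul]; ring
      rw [this]
      refine Ideal.add_mem _ (Ideal.mul_mem_right _ _ hp) ?_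
      by_cases h : j = i
      · subst h
        simp only [pi, aeval_X, if_pos rfl, sub_zero]
        exact Ideal.mul_mem_right _ _ (Ideal.subset_span (by simp))
      · simp only [pi, aeval_X, if_neg h, sub_self, zero_mul]
        exact Ideal.zero_mem _

lemma pi_of_dvd {i : Fin 8} {g : R8} (h : X i ∣ g) : pi i g = 0 := by
  obtain ⟨c, rfl⟩ := h
  simp [pi]

lemma X_dvd_iff_pi {i : Fin 8} {g : R8} : X i ∣ g ↔ pi i g = 0 := by
  refine ⟨pi_of_dvd, fun h => ?_⟩
  have := sub_pi_mem i g
  rw [h, sub_zero, Ideal.mem_span_singleton] at this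
  exact this

lemma prime_X (i : Fin 8) : Prime (X i : R8) := by
  refine ⟨X_ne_zero i, ?_, fun a b hab => ?_⟩
  · intro hu
    have := pi_of_dvd (i := i) (g := 1) hu.dvd
    simp at this
  · rw [X_dvd_iff_pi, map_mul] at hab
    rcases mul_eq_zero.1 hab with h | h
    · exact Or.inl (X_dvd_iff_pi.2 h)
    · exact Or.inr (X_dvd_iff_pi.2 h)

lemma not_dvd_of_eval {i : Fin 8} {q : R8} (θ : Fin 8 → ℂ) (h0 : θ i = 0)
    (hq : eval θ q ≠ 0) : ¬ X i ∣ q := by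
  rintro ⟨c, rfl⟩
  simp [h0] at hq





/-- `a` is a nonzerodivisor modulo `I`. -/
def Nzd (I : Ideal R8) (a : R8) : Prop := ∀ g, a * g ∈ I → g ∈ I

lemma nzd_bot {a : R8} (ha : a ≠ 0) : Nzd ⊥ a := by
  intro g hg
  have h : a * g = 0 := by simpa using hg
  rcases mul_eq_zero.1 h with h' | h'
  · exact absurd h' ha
  · simp [h']

lemma Nzd.mul {I : Ideal R8} {a b : R8} (ha : Nzd I a) (hb : Nzd I b) : Nzd I (a * b) := by
  intro g hg
  exact hb g (ha _ (by rwa [← mul_assoc]))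

lemma Nzd.pow {I : Ideal R8} {a : R8} (ha : Nzd I a) (N : ℕ) : Nzd I (a ^ N) := by
  induction N with
  | zero => intro g hg; simpa using hg
  | succ n ih => rw [pow_succ]; exact ih.mul ha

/-- swap lemma -/
lemma nzd_swap {I : Ideal R8} {a b : R8}
    (h1 : Nzd (I ⊔ Ideal.span {a}) b) (h2 : Nzd I a) :
    Nzd (I ⊔ Ideal.span {b}) a := by
  intro m hm
  rw [Submodule.mem_sup] at hm
  obtain ⟨i, hi, y, hy, hiy⟩ := hm
  rw [Ideal.mem_span_singleton] at hy
  obtain ⟨n, rfl⟩ := hy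
  have hbn : b * n ∈ I ⊔ Ideal.span {a} := by
    have : b * n = a * m - i := by linear_combination hiy
    rw [this]
    exact Submodule.sub_mem _ (le_sup_right (α := Ideal R8) (Ideal.mem_span_singleton.2 ⟨m, rfl⟩)) (le_sup_left (α := Ideal R8) hi)
  have hn := h1 n hbn
  rw [Submodule.mem_sup] at hn
  obtain ⟨i', hi', y', hy', hiy'⟩ := hn
  rw [Ideal.mem_span_singleton] at hy'
  obtain ⟨m', rfl⟩ := hy'
  have key : a * (m - b * m') ∈ I := by
    have : a * (m - b * m') = i + b * i' := by linear_combination -hiy - b * hiy'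
    rw [this]
    exact Ideal.add_mem _ hi (Ideal.mul_mem_left _ _ hi')
  have := h2 _ key
  have hmm : m = (m - b * m') + b * m' := by ring
  rw [hmm]
  exact Submodule.add_mem _ (le_sup_left (α := Ideal R8) this)
    (le_sup_right (α := Ideal R8) (Ideal.mem_span_singleton.2 ⟨m', mul_comm b m' ▸ rfl⟩))

lemma nzd_prime {p a : R8} (hp : Prime p) (ha : ¬ p ∣ a) : Nzd (Ideal.span {p}) a := by
  intro g hg
  rw [Ideal.mem_span_singleton] at hg ⊢
  rcases hp.2.2 _ _ hg with h | h
  · exact absurd h ha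
  · exact h





noncomputable def ι : R8 →+* K8 := algebraMap R8 K8

lemma ι_inj : Function.Injective ι := IsFractionRing.injective R8 K8

/-- elimination lemma -/
lemma elim_lemma (I : Ideal R8) (S : Set (Fin 8)) (u : R8)
    (hu : u ∈ supported ℂ S)
    (hX : ∀ i, i ∉ S → ∃ w ∈ supported ℂ S, u * X i - w ∈ I) :
    ∀ g : R8, ∃ (N : ℕ) (P : R8), P ∈ supported ℂ S ∧ u ^ N * g - P ∈ I := by
  intro g
  induction g using MvPolynomial.induction_on with
  | C c =>
      exact ⟨0, C c, Subalgebra.algebraMap_mem _ c, by simp⟩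
  | add p q hp hq =>
      obtain ⟨N1, P1, hP1, h1⟩ := hp
      obtain ⟨N2, P2, hP2, h2⟩ := hq
      refine ⟨N1 + N2, u ^ N2 * P1 + u ^ N1 * P2,
        Subalgebra.add_mem _ (Subalgebra.mul_mem _ (Subalgebra.pow_mem _ hu _) hP1)
          (Subalgebra.mul_mem _ (Subalgebra.pow_mem _ hu _) hP2), ?_⟩
      have : u ^ (N1 + N2) * (p + q) - (u ^ N2 * P1 + u ^ N1 * P2)
          = u ^ N2 * (u ^ N1 * p - P1) + u ^ N1 * (u ^ N2 * q - P2) := by ring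
      rw [this]
      exact Ideal.add_mem _ (Ideal.mul_mem_left _ _ h1) (Ideal.mul_mem_left _ _ h2)
  | mul_X p j hp =>
      obtain ⟨N, P, hP, h1⟩ := hp
      by_cases hj : j ∈ S
      · refine ⟨N, X j * P, Subalgebra.mul_mem _ (X_mem_supported.2 hj) hP, ?_⟩
        have : u ^ N * (p * X j) - X j * P = X j * (u ^ N * p - P) := by ring
        rw [this]
        exact Ideal.mul_mem_left _ _ h1
      · obtain ⟨w, hw, hwI⟩ := hX j hj
        refine ⟨N + 1, w * P, Subalgebra.mul_mem _ hw hP, ?_⟩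
        have : u ^ (N + 1) * (p * X j) - w * P
            = (u * X j) * (u ^ N * p - P) + (u * X j - w) * P := by ring
        rw [this]
        exact Ideal.add_mem _ (Ideal.mul_mem_left _ _ h1) (Ideal.mul_mem_right _ _ hwI)

/-- aeval agrees with algebraMap on supported polynomials -/
lemma aeval_eq_of_supported (S : Set (Fin 8)) (v : Fin 8 → K8)
    (hv : ∀ i ∈ S, v i = ι (X i)) {P : R8} (hP : P ∈ supported ℂ S) :
    aeval v P = ι P := by
  rw [supported_eq_adjoin_X] at hP
  induction hP using Algebra.adjoin_induction with
  | mem x hx =>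
      obtain ⟨i, hi, rfl⟩ := hx
      simp [hv i hi]
  | algebraMap c =>
      rw [AlgHom.commutes, ι, IsScalarTower.algebraMap_apply ℂ R8 K8]
  | add x y _ _ hx hy => rw [map_add, ι.map_add, hx, hy]
  | mul x y _ _ hx hy => rw [map_mul, ι.map_mul, hx, hy]


-- ## concrete polynomials

noncomputable def pe : R8 := X 4 * X 1 + X 6 * X 3
noncomputable def pf : R8 := X 5 * X 0 + X 7 * X 2
noncomputable def ph : R8 := X 4 * X 0 - X 5 * X 1 + X 6 * X 2 - X 7 * X 3
noncomputable def pH : R8 := (X 1 * X 2 - X 0 * X 3) * (X 0 * X 6 + X 1 * X 7)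

lemma pe_ne : pe ≠ 0 := by
  intro h
  have := congrArg (eval (fun _ => (1:ℂ))) h
  simp [pe] at this

lemma pf_ne : pf ≠ 0 := by
  intro h
  have := congrArg (eval (fun _ => (1:ℂ))) h
  simp [pf] at this

lemma pH_ne : pH ≠ 0 := by
  intro h
  have := congrArg (eval (fun i : Fin 8 =>
    if i = 1 then (1:ℂ) else if i = 2 then 1 else if i = 7 then 1 else 0)) h
  simp [pH] at this

lemma nzd_span_var {q : R8} {i : Fin 8} (hq : q ≠ 0) (h : ¬ X i ∣ q) :
    Nzd (Ideal.span {q}) (X i) := by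
  have h1 : Nzd ((⊥ : Ideal R8) ⊔ Ideal.span {X i}) q := by
    rw [bot_sup_eq]; exact nzd_prime (prime_X i) h
  have := nzd_swap h1 (nzd_bot (X_ne_zero i))
  rwa [bot_sup_eq] at this

lemma nzd_two_vars {q : R8} {i j : Fin 8} (hij : i ≠ j)
    (hi : ¬ X i ∣ q) (hj : ¬ X j ∣ q) : Nzd (Ideal.span {X i * X j}) q := by
  intro g hg
  rw [Ideal.mem_span_singleton] at hg ⊢
  have hdi : (X i : R8) ∣ g := by
    rcases (prime_X i).2.2 _ _ (dvd_trans (dvd_mul_right _ _) hg) with h | h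
    · exact absurd h hi
    · exact h
  obtain ⟨g', rfl⟩ := hdi
  have hdj : (X j : R8) ∣ q * (X i * g') := by
    have : (X j : R8) ∣ X i * X j := dvd_mul_left _ _
    exact dvd_trans this hg
  have : (X j : R8) ∣ g' := by
    rcases (prime_X j).2.2 _ _ hdj with h | h
    · exact absurd h hj
    · rcases (prime_X j).2.2 _ _ (by rwa [] at h) with h' | h'
      · exact absurd ((X_dvd_X).1 h') (Ne.symm hij)
      · exact h'
  obtain ⟨g'', rfl⟩ := this
  exact ⟨g'', by ring⟩

-- divisibility facts
lemma not_X0_pe : ¬ (X 0 : R8) ∣ pe := by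
  apply not_dvd_of_eval (fun i : Fin 8 => if i = 0 then 0 else 1) (by simp)
  simp [pe]
lemma not_X1_pe : ¬ (X 1 : R8) ∣ pe := by
  apply not_dvd_of_eval (fun i : Fin 8 => if i = 1 then 0 else 1) (by simp)
  simp [pe]
lemma not_X2_pe : ¬ (X 2 : R8) ∣ pe := by
  apply not_dvd_of_eval (fun i : Fin 8 => if i = 2 then 0 else 1) (by simp)
  simp [pe]
lemma not_X7_pe : ¬ (X 7 : R8) ∣ pe := by
  apply not_dvd_of_eval (fun i : Fin 8 => if i = 7 then 0 else 1) (by simp)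
  simp [pe]
lemma not_X6_pf : ¬ (X 6 : R8) ∣ pf := by
  apply not_dvd_of_eval (fun i : Fin 8 => if i = 6 then 0 else 1) (by simp)
  simp [pf]
lemma not_X3_pf : ¬ (X 3 : R8) ∣ pf := by
  apply not_dvd_of_eval (fun i : Fin 8 => if i = 3 then 0 else 1) (by simp)
  simp [pf]

-- the substitution maps into the fraction field
noncomputable def vv : Fin 8 → K8 := fun i =>
  if i = 4 then -(ι (X 6) * ι (X 3)) / ι (X 1)
  else if i = 5 then -(ι (X 7) * ι (X 2)) / ι (X 0) else ι (X i)

noncomputable def vv1 : Fin 8 → K8 := fun i =>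
  if i = 4 then -(ι (X 6) * ι (X 3)) / ι (X 1) else ι (X i)

lemma ιX_ne (i : Fin 8) : ι (X i) ≠ 0 := by
  intro h
  exact X_ne_zero i (ι_inj (by simpa using h))

lemma vv_pe : aeval vv pe = 0 := by
  have h1 : vv 4 = -(ι (X 6) * ι (X 3)) / ι (X 1) := by simp [vv]
  have h2 : vv 1 = ι (X 1) := by simp [vv]
  have h3 : vv 6 = ι (X 6) := by simp [vv]
  have h4 : vv 3 = ι (X 3) := by simp [vv]
  simp only [pe, map_add, map_mul, aeval_X, h1, h2, h3, h4]
  have hne := ιX_ne 1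
  field_simp
  ring

lemma vv_pf : aeval vv pf = 0 := by
  have h1 : vv 5 = -(ι (X 7) * ι (X 2)) / ι (X 0) := by simp [vv]
  have h2 : vv 0 = ι (X 0) := by simp [vv]
  have h3 : vv 7 = ι (X 7) := by simp [vv]
  have h4 : vv 2 = ι (X 2) := by simp [vv]
  simp only [pf, map_add, map_mul, aeval_X, h1, h2, h3, h4]
  have hne := ιX_ne 0
  field_simp
  ring

lemma vv1_pe : aeval vv1 pe = 0 := by
  have h1 : vv1 4 = -(ι (X 6) * ι (X 3)) / ι (X 1) := by simp [vv1]
  have h2 : vv1 1 = ι (X 1) := by simp [vv1]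
  have h3 : vv1 6 = ι (X 6) := by simp [vv1]
  have h4 : vv1 3 = ι (X 3) := by simp [vv1]
  simp only [pe, map_add, map_mul, aeval_X, h1, h2, h3, h4]
  have hne := ιX_ne 1
  field_simp
  ring

-- ## main nonzerodivisor facts

def S1 : Set (Fin 8) := {i | i ≠ 4}
def S2 : Set (Fin 8) := {i | i ≠ 4 ∧ i ≠ 5}

lemma pf_mem_S1 : pf ∈ supported ℂ S1 := by
  refine Subalgebra.add_mem _ (Subalgebra.mul_mem _ ?_ ?_) (Subalgebra.mul_mem _ ?_ ?_) <;>
    exact X_mem_supported.2 (by simp [S1])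

lemma nzd_pe_X1 : Nzd (Ideal.span {pe}) (X 1) := nzd_span_var pe_ne not_X1_pe
lemma nzd_pe_X0 : Nzd (Ideal.span {pe}) (X 0) := nzd_span_var pe_ne not_X0_pe

/-- F3 : pf is a nonzerodivisor mod (pe) -/
lemma nzd_pe_pf : Nzd (Ideal.span {pe}) pf := by
  intro g hg
  obtain ⟨N, P, hP, hNP⟩ := elim_lemma (Ideal.span {pe}) S1 (X 1)
    (X_mem_supported.2 (by simp [S1]))
    (fun i hi => by
      have hi4 : i = 4 := by
        simp only [S1, Set.mem_setOf_eq, not_not] at hi; exact hi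
      subst hi4
      refine ⟨-(X 6 * X 3), Subalgebra.neg_mem _
        (Subalgebra.mul_mem _ (X_mem_supported.2 (by simp [S1])) (X_mem_supported.2 (by simp [S1]))), ?_⟩
      rw [Ideal.mem_span_singleton]
      exact ⟨1, by rw [pe]; ring⟩) g
  have hfP : pf * P ∈ Ideal.span {pe} := by
    have : pf * P = X 1 ^ N * (pf * g) - pf * (X 1 ^ N * g - P) := by ring
    rw [this]
    exact Submodule.sub_mem _ (Ideal.mul_mem_left _ _ hg) (Ideal.mul_mem_left _ _ hNP)
  have hfP0 : pf * P = 0 := by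
    rw [Ideal.mem_span_singleton] at hfP
    obtain ⟨c, hc⟩ := hfP
    have h1 : aeval vv1 (pf * P) = 0 := by
      rw [hc, map_mul, vv1_pe, zero_mul]
    have h2 : aeval vv1 (pf * P) = ι (pf * P) := by
      apply aeval_eq_of_supported S1 vv1
      · intro i hi
        have : i ≠ 4 := hi
        simp [vv1, this]
      · exact Subalgebra.mul_mem _ pf_mem_S1 hP
    have : ι (pf * P) = ι 0 := by rw [← h2, h1, map_zero]
    exact ι_inj this
  rcases mul_eq_zero.1 hfP0 with h | h
  · exact absurd h pf_ne
  · rw [h, sub_zero] at hNP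
    exact (nzd_pe_X1.pow N) g hNP

/-- F4 : pf is a nonzerodivisor mod (pe, X0) -/
lemma nzd_peX0_pf : Nzd (Ideal.span {pe} ⊔ Ideal.span {(X 0 : R8)}) pf := by
  intro g hg
  rw [Submodule.mem_sup] at hg
  obtain ⟨a, ha, b, hb, hab⟩ := hg
  rw [Ideal.mem_span_singleton] at ha hb
  obtain ⟨a', rfl⟩ := ha
  obtain ⟨b', rfl⟩ := hb
  have hpig : (X 7 * X 2 : R8) * pi 0 g ∈ Ideal.span {pe} := by
    have h1 : pi 0 (pf * g) = pi 0 (pe * a') + pi 0 (X 0 * b') := by rw [← map_add, hab]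
    have h2 : pi 0 pf = X 7 * X 2 := by simp [pi, pf]
    have h3 : pi 0 pe = pe := by simp [pi, pe]
    have h4 : pi 0 (X 0 : R8) = 0 := by simp [pi]
    rw [map_mul, map_mul, map_mul, h2, h3, h4, zero_mul, add_zero] at h1
    rw [h1]
    exact Ideal.mul_mem_right _ _ (Ideal.subset_span rfl)
  have hmem : pi 0 g ∈ Ideal.span {pe} :=
    ((nzd_span_var pe_ne not_X7_pe).mul (nzd_span_var pe_ne not_X2_pe)) _ hpig
  have : g = pi 0 g + (g - pi 0 g) := by ring
  rw [this]
  exact Submodule.add_mem _ (Submodule.mem_sup_left hmem)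
    (Submodule.mem_sup_right (sub_pi_mem 0 g))

/-- F5 : pf is a nonzerodivisor mod (pe, X1) -/
lemma nzd_peX1_pf : Nzd (Ideal.span {pe} ⊔ Ideal.span {(X 1 : R8)}) pf := by
  intro g hg
  rw [Submodule.mem_sup] at hg
  obtain ⟨a, ha, b, hb, hab⟩ := hg
  rw [Ideal.mem_span_singleton] at ha hb
  obtain ⟨a', rfl⟩ := ha
  obtain ⟨b', rfl⟩ := hb
  have hpig : pf * pi 1 g ∈ Ideal.span {(X 6 * X 3 : R8)} := by
    have h1 : pi 1 (pf * g) = pi 1 (pe * a') + pi 1 (X 1 * b') := by rw [← map_add, hab]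
    have h2 : pi 1 pf = pf := by simp [pi, pf]
    have h3 : pi 1 pe = X 6 * X 3 := by simp [pi, pe]
    have h4 : pi 1 (X 1 : R8) = 0 := by simp [pi]
    rw [map_mul, map_mul, map_mul, h2, h3, h4, zero_mul, add_zero] at h1
    rw [h1]
    exact Ideal.mul_mem_right _ _ (Ideal.subset_span rfl)
  have hmem : pi 1 g ∈ Ideal.span {(X 6 * X 3 : R8)} :=
    nzd_two_vars (by decide) not_X6_pf not_X3_pf _ hpig
  have hle : Ideal.span {(X 6 * X 3 : R8)} ≤ Ideal.span {pe} ⊔ Ideal.span {(X 1 : R8)} := by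
    rw [Ideal.span_le, Set.singleton_subset_iff]
    have : (X 6 * X 3 : R8) = pe - X 4 * X 1 := by rw [pe]; ring
    rw [this]
    exact Submodule.sub_mem _ (Submodule.mem_sup_left (Ideal.subset_span rfl))
      (Submodule.mem_sup_right (Ideal.mem_span_singleton.2 ⟨X 4, by ring⟩))
  have : g = pi 1 g + (g - pi 1 g) := by ring
  rw [this]
  exact Submodule.add_mem _ (hle hmem) (Submodule.mem_sup_right (sub_pi_mem 1 g))

lemma nzd_pepf_X0 : Nzd (Ideal.span {pe} ⊔ Ideal.span {pf}) (X 0) :=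
  nzd_swap nzd_peX0_pf nzd_pe_X0

lemma nzd_pepf_X1 : Nzd (Ideal.span {pe} ⊔ Ideal.span {pf}) (X 1) :=
  nzd_swap nzd_peX1_pf nzd_pe_X1

/-- T3 : ph is a nonzerodivisor mod (pe, pf) -/
lemma nzd_pepf_ph : Nzd (Ideal.span {pe} ⊔ Ideal.span {pf}) ph := by
  set I2 : Ideal R8 := Ideal.span {pe} ⊔ Ideal.span {pf} with hI2
  intro g hg
  obtain ⟨N, P, hP, hNP⟩ := elim_lemma I2 S2 (X 0 * X 1)
    (Subalgebra.mul_mem _ (X_mem_supported.2 (by simp [S2])) (X_mem_supported.2 (by simp [S2])))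
    (fun i hi => by
      have hi45 : i = 4 ∨ i = 5 := by
        simp only [S2, Set.mem_setOf_eq, not_and_or, not_not] at hi
        exact hi
      rcases hi45 with rfl | rfl
      · refine ⟨-(X 0 * (X 6 * X 3)), Subalgebra.neg_mem _ (Subalgebra.mul_mem _
          (X_mem_supported.2 (by simp [S2])) (Subalgebra.mul_mem _
          (X_mem_supported.2 (by simp [S2])) (X_mem_supported.2 (by simp [S2])))), ?_⟩
        have : X 0 * X 1 * X 4 - -(X 0 * (X 6 * X 3)) = X 0 * pe := by rw [pe]; ring
        rw [this]
        exact Submodule.mem_sup_left (Ideal.mem_span_singleton.2 ⟨X 0, mul_comm _ _⟩)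
      · refine ⟨-(X 1 * (X 7 * X 2)), Subalgebra.neg_mem _ (Subalgebra.mul_mem _
          (X_mem_supported.2 (by simp [S2])) (Subalgebra.mul_mem _
          (X_mem_supported.2 (by simp [S2])) (X_mem_supported.2 (by simp [S2])))), ?_⟩
        have : X 0 * X 1 * X 5 - -(X 1 * (X 7 * X 2)) = X 1 * pf := by rw [pf]; ring
        rw [this]
        exact Submodule.mem_sup_right (Ideal.mem_span_singleton.2 ⟨X 1, mul_comm _ _⟩)) g
  have hD : (X 0 ^ 2 * pe - X 1 ^ 2 * pf : R8) ∈ I2 :=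
    Submodule.sub_mem _
      (Submodule.mem_sup_left (Ideal.mem_span_singleton.2 ⟨X 0 ^ 2, mul_comm _ _⟩))
      (Submodule.mem_sup_right (Ideal.mem_span_singleton.2 ⟨X 1 ^ 2, mul_comm _ _⟩))
  have hHP : pH * P ∈ I2 := by
    have key : pH * P = (X 0 * X 1) ^ N * (X 0 * X 1) * (ph * g)
        - (X 0 * X 1) ^ N * g * (X 0 ^ 2 * pe - X 1 ^ 2 * pf)
        - pH * ((X 0 * X 1) ^ N * g - P) := by
      rw [pH, ph, pe, pf]; ring
    rw [key]
    exact Submodule.sub_mem _ (Submodule.sub_mem _ (Ideal.mul_mem_left _ _ hg)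
      (Ideal.mul_mem_left _ _ hD)) (Ideal.mul_mem_left _ _ hNP)
  have hHPsup : pH * P ∈ supported ℂ S2 := by
    refine Subalgebra.mul_mem _ ?_ hP
    rw [pH]
    refine Subalgebra.mul_mem _ (Subalgebra.sub_mem _ ?_ ?_) (Subalgebra.add_mem _ ?_ ?_) <;>
      refine Subalgebra.mul_mem _ (X_mem_supported.2 (by simp [S2])) (X_mem_supported.2 (by simp [S2]))
  have hHP0 : pH * P = 0 := by
    rw [hI2, Submodule.mem_sup] at hHP
    obtain ⟨a, ha, b, hb, hab⟩ := hHP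
    rw [Ideal.mem_span_singleton] at ha hb
    obtain ⟨a', rfl⟩ := ha
    obtain ⟨b', rfl⟩ := hb
    have h1 : aeval vv (pH * P) = 0 := by
      rw [← hab, map_add, map_mul, map_mul, vv_pe, vv_pf, zero_mul, zero_mul, add_zero]
    have h2 : aeval vv (pH * P) = ι (pH * P) := by
      apply aeval_eq_of_supported S2 vv
      · intro i hi
        have h4 : i ≠ 4 := hi.1
        have h5 : i ≠ 5 := hi.2
        simp [vv, h4, h5]
      · exact hHPsup
    have : ι (pH * P) = ι 0 := by rw [← h2, h1, map_zero]
    exact ι_inj this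
  rcases mul_eq_zero.1 hHP0 with h | h
  · exact absurd h pH_ne
  · rw [h, sub_zero] at hNP
    exact ((nzd_pepf_X0.mul nzd_pepf_X1).pow N) g hNP

-- ## quotient module lemma

lemma isSMulRegular_of_nzd {I : Ideal R8} {r : R8} (h : Nzd I r) :
    IsSMulRegular (R8 ⧸ (I • ⊤ : Submodule R8 R8)) r := by
  have hN : (I • ⊤ : Submodule R8 R8) = I := by rw [smul_eq_mul, Ideal.mul_top]
  intro x y hxy
  obtain ⟨a, rfl⟩ := Submodule.Quotient.mk_surjective _ x
  obtain ⟨b, rfl⟩ := Submodule.Quotient.mk_surjective _ y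
  simp only [← Submodule.Quotient.mk_smul] at hxy
  rw [Submodule.Quotient.eq, hN] at hxy ⊢
  have : r • a - r • b = r * (a - b) := by
    simp [smul_eq_mul]; ring
  rw [this] at hxy
  exact h _ hxy

end Sl2Aux

open Sl2Aux in


/-- The components of the moment map of the `SL₂(ℂ)`-module `V = ℂ² ⊕ ℂ²`,
evaluated on the standard basis `e`, `f`, `h` of `𝔰𝔩₂`.  Variables `0,…,3`
are the coordinates `x₁,…,x₄` on `V` and variables `4,…,7` are the dual
coordinates `y₁,…,y₄`. -/
theorem sl2_two_copies_moment_components_isRegular :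
    RingTheory.Sequence.IsRegular (MvPolynomial (Fin 8) ℂ)
      [ (X 4 * X 1 + X 6 * X 3 : MvPolynomial (Fin 8) ℂ),    -- μ_e = y₁x₂ + y₃x₄
        (X 5 * X 0 + X 7 * X 2 : MvPolynomial (Fin 8) ℂ),    -- μ_f = y₂x₁ + y₄x₃
        (X 4 * X 0 - X 5 * X 1 + X 6 * X 2 - X 7 * X 3 : MvPolynomial (Fin 8) ℂ) ] := by
        -- μ_h = y₁x₁ − y₂x₂ + y₃x₃ − y₄x₄
  classical
  show RingTheory.Sequence.IsRegular Sl2Aux.R8 [Sl2Aux.pe, Sl2Aux.pf, Sl2Aux.ph]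
  rw [RingTheory.Sequence.isRegular_iff]
  constructor
  · rw [RingTheory.Sequence.isWeaklyRegular_iff]
    intro i hi
    have hlen : i < 3 := by simpa using hi
    interval_cases i
    · have h : Ideal.ofList (List.take 0 [Sl2Aux.pe, Sl2Aux.pf, Sl2Aux.ph]) = ⊥ := by
        simp
      rw [h]
      exact isSMulRegular_of_nzd (I := ⊥) (nzd_bot pe_ne)
    · have h : Ideal.ofList (List.take 1 [Sl2Aux.pe, Sl2Aux.pf, Sl2Aux.ph])
          = Ideal.span {Sl2Aux.pe} := by
        simp [Ideal.ofList_singleton]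
      rw [h]
      exact isSMulRegular_of_nzd (I := Ideal.span {pe}) nzd_pe_pf
    · have h : Ideal.ofList (List.take 2 [Sl2Aux.pe, Sl2Aux.pf, Sl2Aux.ph])
          = Ideal.span {Sl2Aux.pe} ⊔ Ideal.span {Sl2Aux.pf} := by
        simp [Ideal.ofList_cons, Ideal.ofList_singleton]
      rw [h]
      exact isSMulRegular_of_nzd (I := Ideal.span {pe} ⊔ Ideal.span {pf}) nzd_pepf_ph
  · intro htop
    have h1 : (1 : MvPolynomial (Fin 8) ℂ) ∈
        (Ideal.ofList [pe, pf, ph] • ⊤ : Submodule (MvPolynomial (Fin 8) ℂ) (MvPolynomial (Fin 8) ℂ)) := by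
      rw [← htop]; trivial
    rw [smul_eq_mul, Ideal.mul_top] at h1
    have hle : Ideal.ofList [pe, pf, ph] ≤ RingHom.ker (constantCoeff (R := ℂ) (σ := Fin 8)) := by
      rw [Ideal.span_le]
      intro x hx
      simp only [Set.mem_setOf_eq, List.mem_cons, List.not_mem_nil, or_false] at hx
      rcases hx with rfl | rfl | rfl <;>
        simp [RingHom.mem_ker, pe, pf, ph]
    have := hle h1
    simp [RingHom.mem_ker] at this
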